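/- Binomial-type convolution identity: for a finite set A of positive integers, t_A(x, y; z + w) = ∑_{B ⊔ C = A} t_B(x, y; z) · t_C(x, y; w), summing over ordered pairs of disjoint sets B, C with B ∪ C = A. -/

import Mathlib

variable {R : Type*} [CommRing R]

/-- Strehl's polynomial `s_A(x,y;z) = ∏_{a ∈ A} (z + y^A_{≤a} + x^A_{>a})`, where
`y^A_{≤a} = ∑_{j ∈ A, j ≤ a} y_j` and `x^A_{>a} = ∑_{j ∈ A, j > a} x_{a,j}`. -/
def sPoly (x : ℕ → ℕ → R) (y : ℕ → R) (A : Finset ℕ) (z : R) : R :=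
  ∏ a ∈ A,
    (z + ∑ j ∈ A.filter (fun j => j ≤ a), y j + ∑ j ∈ A.filter (fun j => a < j), x a j)

/-- Strehl's polynomial `t_A(x,y;z) = z · ∏_{a ∈ A, a ≠ max A} (z + y^A_{≤a} + x^A_{>a})`,
with `t_∅ = 1`.  (An element `a ∈ A` satisfies `a ≠ max A` iff some `b ∈ A` exceeds it.) -/
def tPoly (x : ℕ → ℕ → R) (y : ℕ → R) (A : Finset ℕ) (z : R) : R :=
  if A = ∅ then 1
  else
    z * ∏ a ∈ A.filter (fun a => ∃ b ∈ A, a < b),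
      (z + ∑ j ∈ A.filter (fun j => j ≤ a), y j + ∑ j ∈ A.filter (fun j => a < j), x a j)

namespace StrehlAux

open Finset

variable (x : ℕ → ℕ → R) (y : ℕ → R)

/-- contribution of an element `u` to the factor of `a` when `u` joins the ground set -/
def dd (u a : ℕ) : R := if u ≤ a then y u else x a u

/-- the factor of `a` relative to ground set `S` -/
def FF (S : Finset ℕ) (a : ℕ) (v : R) : R :=
  v + ∑ j ∈ S.filter (fun j => j ≤ a), y j + ∑ j ∈ S.filter (fun j => a < j), x a j

/-- marked t-polynomial: `v` times all factors except those of the marked set `P` -/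
def tt (S P : Finset ℕ) (v : R) : R := v * ∏ a ∈ S \ P, FF x y S a v

lemma FF_insert {u : ℕ} {S : Finset ℕ} (hu : u ∉ S) (a : ℕ) (v : R) :
    FF x y (insert u S) a v = dd x y u a + FF x y S a v := by
  unfold FF dd
  rcases le_or_gt u a with h | h
  · rw [if_pos h, filter_insert, if_pos h, filter_insert, if_neg (by omega : ¬ a < u),
      sum_insert (by simp [hu])]
    ring
  · rw [if_neg (by omega : ¬ u ≤ a), filter_insert, if_neg (by omega : ¬ u ≤ a),
      filter_insert, if_pos h, sum_insert (by simp [hu])]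
    ring

lemma prod_FF_insert {u : ℕ} {S : Finset ℕ} (hu : u ∉ S) (E : Finset ℕ) (v : R) :
    ∏ a ∈ E, FF x y (insert u S) a v
      = ∑ U ∈ E.powerset, (∏ a ∈ U, dd x y u a) * ∏ a ∈ E \ U, FF x y S a v := by
  rw [Finset.prod_congr rfl (fun a _ => FF_insert x y hu a v), Finset.prod_add]

lemma insert_sdiff_insert' {u : ℕ} {S P : Finset ℕ} (hu : u ∉ S) :
    (insert u S) \ (insert u P) = S \ P := by
  ext a
  simp only [mem_sdiff, mem_insert, not_or]
  constructor
  · rintro ⟨ha | ha, h1, h2⟩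
    · exact absurd ha h1
    · exact ⟨ha, h2⟩
  · rintro ⟨ha, h2⟩
    exact ⟨Or.inr ha, fun h => hu (h ▸ ha), h2⟩

lemma tt_insert {u : ℕ} {S : Finset ℕ} (hu : u ∉ S) (P : Finset ℕ) (v : R) :
    tt x y (insert u S) (insert u P) v
      = ∑ U ∈ (S \ P).powerset, (∏ a ∈ U, dd x y u a) * tt x y S (P ∪ U) v := by
  unfold tt
  rw [insert_sdiff_insert' hu, prod_FF_insert x y hu, mul_sum]
  refine Finset.sum_congr rfl fun U hU => ?_
  have h : (S \ P) \ U = S \ (P ∪ U) := by rw [sdiff_sdiff]; rfl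
  rw [h]
  ring

lemma FF_max {M : ℕ} {S : Finset ℕ} (h : ∀ a ∈ S, a ≤ M) (v : R) :
    FF x y S M v = v + ∑ j ∈ S, y j := by
  unfold FF
  rw [filter_true_of_mem (fun a ha => h a ha),
    filter_false_of_mem (fun a ha => by have := h a ha; omega), sum_empty, add_zero]

lemma tt_unmark {M : ℕ} {S P : Finset ℕ} (hM : M ∈ S) (hP : M ∉ P) (v : R) :
    tt x y S P v = FF x y S M v * tt x y S (insert M P) v := by
  unfold tt
  have h : S \ insert M P = (S \ P).erase M := by
    ext a; simp only [mem_sdiff, mem_insert, mem_erase, not_or]; tauto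
  rw [h, ← Finset.mul_prod_erase (S \ P) _ (mem_sdiff.mpr ⟨hM, hP⟩)]
  ring

lemma tPoly_eq_tt {M : ℕ} {S : Finset ℕ} (hM : M ∈ S) (hle : ∀ a ∈ S, a ≤ M) (v : R) :
    tPoly x y S v = tt x y S {M} v := by
  have hne : S ≠ ∅ := ne_empty_of_mem hM
  unfold tPoly tt FF
  rw [if_neg hne]
  congr 1
  apply Finset.prod_congr ?_ (fun _ _ => rfl)
  ext a
  simp only [mem_filter, mem_sdiff, mem_singleton]
  constructor
  · rintro ⟨ha, b, hb, hab⟩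
    exact ⟨ha, fun h => by have := hle b hb; omega⟩
  · rintro ⟨ha, hne'⟩
    exact ⟨ha, M, hM, lt_of_le_of_ne (hle a ha) hne'⟩

lemma tPoly_empty (v : R) : tPoly x y ∅ v = 1 := by simp [tPoly]

lemma tt_empty (v : R) : tt x y ∅ ∅ v = v := by simp [tt]

/-- `(v + Y_S) · t_S(v) = v · s_S(v)` in marked form -/
lemma unmark_tPoly (S : Finset ℕ) (v : R) :
    (v + ∑ j ∈ S, y j) * tPoly x y S v = tt x y S ∅ v := by
  rcases S.eq_empty_or_nonempty with rfl | hS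
  · simp [tPoly, tt]
  · have hmax := S.max'_mem hS
    have hle : ∀ a ∈ S, a ≤ S.max' hS := fun a ha => S.le_max' a ha
    rw [tPoly_eq_tt x y hmax hle, tt_unmark x y hmax (notMem_empty _) v,
      FF_max x y hle, insert_empty_eq]

lemma unmark_tt {M : ℕ} {S P : Finset ℕ} (hM : M ∈ S) (hle : ∀ a ∈ S, a ≤ M)
    (hP : M ∉ P) (v : R) :
    tt x y S P v = (v + ∑ j ∈ S, y j) * tt x y S (insert M P) v := by
  rw [tt_unmark x y hM hP v, FF_max x y hle]

-- Fubini helper H0: sum over ordered pairs of disjoint subsets of E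
lemma fubini_disjoint (E : Finset ℕ) (f : Finset ℕ → Finset ℕ → R) :
    ∑ B ∈ E.powerset, ∑ U ∈ (E \ B).powerset, f B U
      = ∑ U ∈ E.powerset, ∑ B ∈ (E \ U).powerset, f B U := by
  have key : ∀ g : Finset ℕ → Finset ℕ → R, ∀ B ∈ E.powerset,
      ∑ U ∈ (E \ B).powerset, g B U = ∑ U ∈ E.powerset, if U ⊆ E \ B then g B U else 0 := by
    intro g B _
    rw [← Finset.sum_filter]
    apply Finset.sum_congr _ (fun _ _ => rfl)
    ext U
    simp only [mem_powerset, mem_filter]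
    exact ⟨fun h => ⟨h.trans (sdiff_subset), h⟩, fun h => h.2⟩
  rw [Finset.sum_congr rfl (key f), Finset.sum_comm]
  rw [Finset.sum_congr rfl (key (fun U B => f B U))]
  refine Finset.sum_congr rfl fun U hU => Finset.sum_congr rfl fun B hB => ?_
  simp only [mem_powerset] at hU hB
  congr 1
  simp only [Finset.subset_sdiff, eq_iff_iff]
  constructor
  · rintro ⟨h1, h2⟩; exact ⟨hB, h2.symm⟩
  · rintro ⟨h1, h2⟩; exact ⟨hU, h2.symm⟩

-- Fubini helper H1: sum over nested pairs U ⊆ B ⊆ E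
lemma fubini_nested (E : Finset ℕ) (f : Finset ℕ → Finset ℕ → R) :
    ∑ B ∈ E.powerset, ∑ U ∈ B.powerset, f U B
      = ∑ U ∈ E.powerset, ∑ B ∈ (E \ U).powerset, f U (U ∪ B) := by
  have key : ∀ B ∈ E.powerset,
      ∑ U ∈ B.powerset, f U B = ∑ U ∈ E.powerset, if U ⊆ B then f U B else 0 := by
    intro B hB
    simp only [mem_powerset] at hB
    rw [← Finset.sum_filter]
    apply Finset.sum_congr _ (fun _ _ => rfl)
    ext U
    simp only [mem_powerset, mem_filter]
    exact ⟨fun h => ⟨h.trans hB, h⟩, fun h => h.2⟩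
  rw [Finset.sum_congr rfl key, Finset.sum_comm]
  refine Finset.sum_congr rfl fun U hU => ?_
  simp only [mem_powerset] at hU
  rw [← Finset.sum_filter]
  apply Finset.sum_nbij' (fun B => B \ U) (fun B => U ∪ B)
  · intro B hB
    simp only [mem_filter, mem_powerset] at hB
    simp only [mem_powerset]
    exact sdiff_subset_sdiff hB.1 Subset.rfl
  · intro B hB
    simp only [mem_powerset] at hB
    simp only [mem_filter, mem_powerset]
    constructor
    · exact Finset.union_subset hU ((subset_sdiff.mp hB).1)
    · exact subset_union_left
  · intro B hB
    simp only [mem_filter, mem_powerset] at hB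
    rw [Finset.union_sdiff_of_subset hB.2]
  · intro B hB
    simp only [mem_powerset, subset_sdiff] at hB
    rw [Finset.union_sdiff_cancel_left hB.2.symm]
  · intro B hB
    simp only [mem_filter, mem_powerset] at hB
    rw [Finset.union_sdiff_of_subset hB.2]


-- Phi and its expansion lemmas (to be appended into the namespace)
/-- convolution sum with marked sets `P` (on the `z` side) and `Q` (on the `w` side) -/
def Phi (A P Q : Finset ℕ) (z w : R) : R :=
  ∑ B ∈ (A \ (P ∪ Q)).powerset,
    tt x y (P ∪ B) P z * tt x y (Q ∪ ((A \ (P ∪ Q)) \ B)) Q w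

lemma insert_sdiff_right {u : ℕ} {A P Q : Finset ℕ} (hu : u ∉ A) :
    (insert u A) \ (P ∪ insert u Q) = A \ (P ∪ Q) := by
  ext a
  simp only [mem_sdiff, mem_insert, mem_union, not_or]
  constructor
  · rintro ⟨ha | ha, h1, h2, h3⟩
    · exact absurd ha h2
    · exact ⟨ha, h1, h3⟩
  · rintro ⟨ha, h1, h3⟩
    exact ⟨Or.inr ha, h1, fun h => hu (h ▸ ha), h3⟩

lemma insert_sdiff_left {u : ℕ} {A P Q : Finset ℕ} (hu : u ∉ A) :
    (insert u A) \ ((insert u P) ∪ Q) = A \ (P ∪ Q) := by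
  ext a
  simp only [mem_sdiff, mem_insert, mem_union, not_or]
  constructor
  · rintro ⟨ha | ha, ⟨h1, h2⟩, h3⟩
    · exact absurd ha h1
    · exact ⟨ha, h2, h3⟩
  · rintro ⟨ha, h1, h3⟩
    exact ⟨Or.inr ha, ⟨fun h => hu (h ▸ ha), h1⟩, h3⟩

lemma sdiff_union_assoc (A P Q U : Finset ℕ) : A \ (P ∪ (Q ∪ U)) = (A \ (P ∪ Q)) \ U := by
  rw [sdiff_sdiff]
  congr 1
  rw [← union_assoc]
  rfl

lemma union_shuffle {Q U D B : Finset ℕ} (hU : U ⊆ D) (hB : B ⊆ D \ U) :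
    (Q ∪ U) ∪ ((D \ U) \ B) = Q ∪ (D \ B) := by
  have hUB : ∀ a ∈ U, a ∈ D ∧ a ∉ B := fun a h =>
    ⟨hU h, fun hB' => (mem_sdiff.mp (hB hB')).2 h⟩
  ext a
  simp only [mem_union, mem_sdiff]
  constructor
  · rintro ((h | h) | ⟨⟨h1, h2⟩, h3⟩)
    · exact Or.inl h
    · exact Or.inr ⟨(hUB a h).1, (hUB a h).2⟩
    · exact Or.inr ⟨h1, h3⟩
  · rintro (h | ⟨h1, h3⟩)
    · exact Or.inl (Or.inl h)
    · by_cases haU : a ∈ U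
      · exact Or.inl (Or.inr haU)
      · exact Or.inr ⟨⟨h1, haU⟩, h3⟩

lemma Phi_insert_right {u : ℕ} {A P Q : Finset ℕ} (hu : u ∉ A) (hP : P ⊆ A) (hQ : Q ⊆ A)
    (z w : R) :
    Phi x y (insert u A) P (insert u Q) z w
      = ∑ S ∈ (A \ (P ∪ Q)).powerset, (∏ a ∈ S, dd x y u a) * Phi x y A P (Q ∪ S) z w := by
  have hQD : Disjoint Q (A \ (P ∪ Q)) := by
    rw [disjoint_comm]
    exact disjoint_left.mpr fun a ha haQ =>
      (mem_sdiff.mp ha).2 (mem_union_right _ haQ)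
  unfold Phi
  rw [insert_sdiff_right hu]
  set D := A \ (P ∪ Q) with hD
  have h2 : ∀ B ∈ D.powerset,
      tt x y (P ∪ B) P z * tt x y ((insert u Q) ∪ (D \ B)) (insert u Q) w
      = ∑ U ∈ (D \ B).powerset,
          tt x y (P ∪ B) P z * ((∏ a ∈ U, dd x y u a) * tt x y (Q ∪ (D \ B)) (Q ∪ U) w) := by
    intro B hB
    have huQ : u ∉ Q ∪ (D \ B) := by
      simp only [mem_union, mem_sdiff, not_or]
      exact ⟨fun h => hu (hQ h), fun h => hu (mem_sdiff.mp h.1).1⟩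
    rw [insert_union, tt_insert x y huQ, union_sdiff_cancel_left (hQD.mono_right sdiff_subset),
      mul_sum]
  rw [Finset.sum_congr rfl h2, fubini_disjoint]
  refine Finset.sum_congr rfl fun U hU => ?_
  rw [sdiff_union_assoc, ← hD, mul_sum]
  refine Finset.sum_congr rfl fun B hB => ?_
  rw [union_shuffle (mem_powerset.mp hU) (mem_powerset.mp hB)]
  ring

lemma Phi_insert_left {u : ℕ} {A P Q : Finset ℕ} (hu : u ∉ A) (hP : P ⊆ A) (hQ : Q ⊆ A)
    (z w : R) :
    Phi x y (insert u A) (insert u P) Q z w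
      = ∑ S ∈ (A \ (P ∪ Q)).powerset, (∏ a ∈ S, dd x y u a) * Phi x y A (P ∪ S) Q z w := by
  have hPD : Disjoint P (A \ (P ∪ Q)) := by
    rw [disjoint_comm]
    exact disjoint_left.mpr fun a ha haP =>
      (mem_sdiff.mp ha).2 (mem_union_left _ haP)
  unfold Phi
  rw [insert_sdiff_left hu]
  set D := A \ (P ∪ Q) with hD
  have h2 : ∀ B ∈ D.powerset,
      tt x y ((insert u P) ∪ B) (insert u P) z * tt x y (Q ∪ (D \ B)) Q w
      = ∑ U ∈ B.powerset,
          ((∏ a ∈ U, dd x y u a) * tt x y (P ∪ B) (P ∪ U) z) * tt x y (Q ∪ (D \ B)) Q w := by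
    intro B hB
    have huP : u ∉ P ∪ B := by
      simp only [mem_union, not_or]
      exact ⟨fun h => hu (hP h), fun h => hu (sdiff_subset (mem_powerset.mp hB h))⟩
    rw [insert_union, tt_insert x y huP,
      union_sdiff_cancel_left (hPD.mono_right (mem_powerset.mp hB)), sum_mul]
  rw [Finset.sum_congr rfl h2, fubini_nested]
  refine Finset.sum_congr rfl fun U hU => ?_
  have h3 : A \ ((P ∪ U) ∪ Q) = D \ U := by
    rw [hD, sdiff_sdiff]
    congr 1
    rw [union_right_comm]
    rfl
  rw [h3, mul_sum]
  refine Finset.sum_congr rfl fun B hB => ?_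
  have h4 : (D \ U) \ B = D \ (U ∪ B) := by rw [sdiff_sdiff]; rfl
  rw [union_assoc, h4]
  ring

/-- symmetrized convolution sum -/
def Psi (A P Q : Finset ℕ) (z w : R) : R := Phi x y A P Q z w + Phi x y A Q P z w

/-- Master invariance: `Psi` depends only on the union of the two marked sets. -/
lemma master (A : Finset ℕ) : ∀ (P Q : Finset ℕ), Disjoint P Q → P ⊆ A → Q ⊆ A →
    ∀ z w : R, Psi x y A P Q z w = Psi x y A (P ∪ Q) ∅ z w := by
  induction A using Finset.strongInduction with
  | _ A ih =>
    intro P Q hPQ hP hQ z w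
    rcases Q.eq_empty_or_nonempty with rfl | hQne
    · rw [union_empty]
    obtain ⟨u, hu⟩ := hQne
    have huA : u ∈ A := hQ hu
    set A₀ := A.erase u with hA₀
    set Q' := Q.erase u with hQ'def
    have hAins : A = insert u A₀ := (insert_erase huA).symm
    have hQins : Q = insert u Q' := (insert_erase hu).symm
    have huA₀ : u ∉ A₀ := notMem_erase u A
    have huP : u ∉ P := disjoint_right.mp hPQ hu
    have hPA₀ : P ⊆ A₀ := subset_erase.mpr ⟨hP, huP⟩
    have hQ'A₀ : Q' ⊆ A₀ := by
      intro a ha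
      exact mem_erase.mpr ⟨(mem_erase.mp ha).1, hQ ((erase_subset u Q) ha)⟩
    have hssub : A₀ ⊂ A := erase_ssubset huA
    have hPQu : P ∪ Q = insert u (P ∪ Q') := by rw [hQins, union_insert]
    have e1 : Phi x y A P Q z w
        = ∑ S ∈ (A₀ \ (P ∪ Q')).powerset,
            (∏ a ∈ S, dd x y u a) * Phi x y A₀ P (Q' ∪ S) z w := by
      rw [hAins, hQins]
      exact Phi_insert_right x y huA₀ hPA₀ hQ'A₀ z w
    have e2 : Phi x y A Q P z w
        = ∑ S ∈ (A₀ \ (P ∪ Q')).powerset,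
            (∏ a ∈ S, dd x y u a) * Phi x y A₀ (Q' ∪ S) P z w := by
      rw [hAins, hQins, Phi_insert_left x y huA₀ hQ'A₀ hPA₀ z w, union_comm Q' P]
    have e3 : Phi x y A (P ∪ Q) ∅ z w
        = ∑ S ∈ (A₀ \ (P ∪ Q')).powerset,
            (∏ a ∈ S, dd x y u a) * Phi x y A₀ ((P ∪ Q') ∪ S) ∅ z w := by
      rw [hAins, hPQu, Phi_insert_left x y huA₀ (union_subset hPA₀ hQ'A₀) (empty_subset _) z w,
        union_empty]
    have e4 : Phi x y A ∅ (P ∪ Q) z w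
        = ∑ S ∈ (A₀ \ (P ∪ Q')).powerset,
            (∏ a ∈ S, dd x y u a) * Phi x y A₀ ∅ ((P ∪ Q') ∪ S) z w := by
      rw [hAins, hPQu, Phi_insert_right x y huA₀ (empty_subset _) (union_subset hPA₀ hQ'A₀) z w,
        empty_union]
    unfold Psi
    rw [e1, e2, e3, e4, ← Finset.sum_add_distrib, ← Finset.sum_add_distrib]
    refine Finset.sum_congr rfl fun S hS => ?_
    rw [← mul_add, ← mul_add]
    congr 1
    have hSsub : S ⊆ A₀ \ (P ∪ Q') := mem_powerset.mp hS
    have hdisj : Disjoint P (Q' ∪ S) := by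
      rw [disjoint_union_right]
      refine ⟨hPQ.mono_right (erase_subset u Q), disjoint_left.mpr fun a haP haS => ?_⟩
      exact (mem_sdiff.mp (hSsub haS)).2 (mem_union_left _ haP)
    have key := ih A₀ hssub P (Q' ∪ S) hdisj hPA₀
      (union_subset hQ'A₀ (hSsub.trans sdiff_subset)) z w
    unfold Psi at key
    rw [← union_assoc] at key
    exact key

lemma singleton_union' (a : ℕ) (s : Finset ℕ) : ({a} : Finset ℕ) ∪ s = insert a s := by
  ext b; simp

lemma set_s6 {A' T U B : Finset ℕ} (hT : T ⊆ A') (hU : U ⊆ A' \ T) (hB : B ⊆ (A' \ T) \ U) :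
    (T ∪ U) ∪ (((A' \ T) \ U) \ B) = A' \ B := by
  have haU : ∀ a ∈ U, a ∈ A' ∧ a ∉ T := fun a h => mem_sdiff.mp (hU h)
  have haB : ∀ a ∈ B, (a ∈ A' ∧ a ∉ T) ∧ a ∉ U := fun a h =>
    ⟨mem_sdiff.mp (mem_sdiff.mp (hB h)).1, (mem_sdiff.mp (hB h)).2⟩
  ext a
  simp only [mem_union, mem_sdiff]
  constructor
  · rintro ((h | h) | ⟨⟨⟨h1, h2⟩, h3⟩, h4⟩)
    · exact ⟨hT h, fun hb => (haB a hb).1.2 h⟩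
    · exact ⟨(haU a h).1, fun hb => (haB a hb).2 h⟩
    · exact ⟨h1, h4⟩
  · rintro ⟨h1, h4⟩
    by_cases h2 : a ∈ T
    · exact Or.inl (Or.inl h2)
    · by_cases h3 : a ∈ U
      · exact Or.inl (Or.inr h3)
      · exact Or.inr ⟨⟨⟨h1, h2⟩, h3⟩, h4⟩

lemma set_s7 {A' T U B : Finset ℕ} (hU : U ⊆ A' \ T) (hB : B ⊆ (A' \ T) \ U) :
    U ∪ (((A' \ T) \ U) \ B) = (A' \ T) \ B := by
  have haU : ∀ a ∈ U, a ∈ A' \ T ∧ a ∉ B := fun a h =>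
    ⟨hU h, fun hb => (mem_sdiff.mp (hB hb)).2 h⟩
  ext a
  simp only [mem_union, mem_sdiff]
  constructor
  · rintro (h | ⟨⟨⟨h1, h2⟩, _⟩, h4⟩)
    · exact ⟨mem_sdiff.mp (haU a h).1, (haU a h).2⟩
    · exact ⟨⟨h1, h2⟩, h4⟩
  · rintro ⟨⟨h1, h2⟩, h4⟩
    by_cases h3 : a ∈ U
    · exact Or.inl h3
    · exact Or.inr ⟨⟨⟨h1, h2⟩, h3⟩, h4⟩

lemma set_s8 {A' T U B : Finset ℕ} (hT : T ⊆ A') (hU : U ⊆ A' \ T) (hB : B ⊆ (A' \ T) \ U) :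
    T ∪ (((A' \ T) \ U) \ B) = A' \ (U ∪ B) := by
  have haT : ∀ a ∈ T, (a ∉ U) ∧ a ∉ B := fun a h =>
    ⟨fun hu => (mem_sdiff.mp (hU hu)).2 h, fun hb => (mem_sdiff.mp (mem_sdiff.mp (hB hb)).1).2 h⟩
  ext a
  simp only [mem_union, mem_sdiff, not_or]
  constructor
  · rintro (h | ⟨⟨⟨h1, _⟩, h3⟩, h4⟩)
    · exact ⟨hT h, (haT a h).1, (haT a h).2⟩
    · exact ⟨h1, h3, h4⟩
  · rintro ⟨h1, h3, h4⟩
    by_cases h2 : a ∈ T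
    · exact Or.inl h2
    · exact Or.inr ⟨⟨⟨h1, h2⟩, h3⟩, h4⟩

/-- The key convolution identity in marked form. -/
lemma star (A : Finset ℕ) : ∀ T, T ⊆ A → ∀ z w : R,
    tt x y A T (z + w)
      = ∑ B ∈ (A \ T).powerset,
          (tPoly x y B z * tt x y (A \ B) T w
            + tt x y (T ∪ B) T z * tPoly x y ((A \ T) \ B) w) := by
  induction A using Finset.strongInduction with
  | _ A ih =>
  rcases A.eq_empty_or_nonempty with rfl | hAne
  · intro T hT z w
    rw [subset_empty.mp hT]
    simp [tt, tPoly]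
    ring
  have hMA : A.max' hAne ∈ A := A.max'_mem hAne
  set M := A.max' hAne with hMdef
  set A' := A.erase M with hA'def
  have hMA' : M ∉ A' := notMem_erase M A
  have hAins : A = insert M A' := (insert_erase hMA).symm
  have hle : ∀ a ∈ A, a ≤ M := fun a ha => A.le_max' a ha
  have hA'sub : A' ⊂ A := erase_ssubset hMA
  have hA'le : ∀ a ∈ A', a ≤ M := fun a ha => hle a ((erase_subset M A) ha)
  -- Case 1 : M ∈ T
  have case1 : ∀ T, T ⊆ A → M ∈ T → ∀ z w : R,
      tt x y A T (z + w)
        = ∑ B ∈ (A \ T).powerset,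
            (tPoly x y B z * tt x y (A \ B) T w
              + tt x y (T ∪ B) T z * tPoly x y ((A \ T) \ B) w) := by
    intro T hT hMT z w
    set T' := T.erase M with hT'def
    have hTins : T = insert M T' := (insert_erase hMT).symm
    have hMT' : M ∉ T' := notMem_erase M T
    have hT'A' : T' ⊆ A' := by
      intro a ha
      exact mem_erase.mpr ⟨(mem_erase.mp ha).1, hT ((erase_subset M T) ha)⟩
    have hAT : A \ T = A' \ T' := by rw [hAins, hTins]; exact insert_sdiff_insert' hMA'
    have perB : ∀ B ∈ (A' \ T').powerset,
        tPoly x y B z * tt x y (A \ B) T w + tt x y (T ∪ B) T z * tPoly x y ((A' \ T') \ B) w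
          = (∑ U ∈ ((A' \ T') \ B).powerset,
               tPoly x y B z * ((∏ a ∈ U, dd x y M a) * tt x y (A' \ B) (T' ∪ U) w))
            + (∑ U ∈ B.powerset,
               ((∏ a ∈ U, dd x y M a) * tt x y (T' ∪ B) (T' ∪ U) z)
                 * tPoly x y ((A' \ T') \ B) w) := by
      intro B hB
      have hBsub : B ⊆ A' \ T' := mem_powerset.mp hB
      have hBA' : B ⊆ A' := hBsub.trans sdiff_subset
      have hMB : M ∉ B := fun h => hMA' (hBA' h)
      have hMAB : M ∉ A' \ B := fun h => hMA' (mem_sdiff.mp h).1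
      have h1 : A \ B = insert M (A' \ B) := by
        rw [hAins]; exact insert_sdiff_of_notMem _ hMB
      have h2 : (A' \ B) \ T' = (A' \ T') \ B := by
        rw [sdiff_sdiff, sdiff_sdiff]; congr 1; exact sup_comm B T'
      have hTB : Disjoint T' B := disjoint_left.mpr fun a ha hb => (mem_sdiff.mp (hBsub hb)).2 ha
      have hMT'B : M ∉ T' ∪ B := by
        simp only [mem_union, not_or]; exact ⟨hMT', hMB⟩
      rw [h1, hTins, tt_insert x y hMAB T' w, h2, mul_sum, insert_union,
        tt_insert x y hMT'B T' z, union_sdiff_cancel_left hTB, sum_mul]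
    have hRHS : ∑ B ∈ (A \ T).powerset,
        (tPoly x y B z * tt x y (A \ B) T w + tt x y (T ∪ B) T z * tPoly x y ((A \ T) \ B) w)
        = (∑ U ∈ (A' \ T').powerset, ∑ B ∈ ((A' \ T') \ U).powerset,
             tPoly x y B z * ((∏ a ∈ U, dd x y M a) * tt x y (A' \ B) (T' ∪ U) w))
          + (∑ U ∈ (A' \ T').powerset, ∑ B ∈ ((A' \ T') \ U).powerset,
             ((∏ a ∈ U, dd x y M a) * tt x y (T' ∪ (U ∪ B)) (T' ∪ U) z)
               * tPoly x y ((A' \ T') \ (U ∪ B)) w) := by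
      rw [hAT, Finset.sum_congr rfl perB, sum_add_distrib]
      congr 1
      · exact fubini_disjoint _ (fun B U =>
          tPoly x y B z * ((∏ a ∈ U, dd x y M a) * tt x y (A' \ B) (T' ∪ U) w))
      · exact fubini_nested _ (fun U B =>
          ((∏ a ∈ U, dd x y M a) * tt x y (T' ∪ B) (T' ∪ U) z)
            * tPoly x y ((A' \ T') \ B) w)
    rw [hRHS, hAins, hTins, tt_insert x y hMA' T' (z + w), ← sum_add_distrib]
    refine Finset.sum_congr rfl fun U hU => ?_
    have hUE : U ⊆ A' \ T' := mem_powerset.mp hU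
    have h1 : A' \ (T' ∪ U) = (A' \ T') \ U := by rw [sdiff_sdiff]; rfl
    rw [ih A' hA'sub (T' ∪ U) (union_subset hT'A' (hUE.trans sdiff_subset)) z w, h1,
      mul_sum, ← sum_add_distrib]
    refine Finset.sum_congr rfl fun B hB => ?_
    have e1 : (T' ∪ U) ∪ B = T' ∪ (U ∪ B) := union_assoc T' U B
    have e2 : ((A' \ T') \ U) \ B = (A' \ T') \ (U ∪ B) := by rw [sdiff_sdiff]; rfl
    rw [e1, e2]
    ring
  intro T hT z w
  by_cases hMT : M ∈ T
  · exact case1 T hT hMT z w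
  -- Case 2 : M ∉ T
  set T₂ := insert M T with hT₂def
  have hT₂A : T₂ ⊆ A := insert_subset hMA hT
  have hMT₂ : M ∈ T₂ := mem_insert_self M T
  have hTA' : T ⊆ A' := fun a ha => mem_erase.mpr ⟨fun h => hMT (h ▸ ha), hT ha⟩
  have hAT₂ : A \ T₂ = A' \ T := by rw [hAins, hT₂def]; exact insert_sdiff_insert' hMA'
  have hMnotAT : M ∉ A' \ T := fun h => hMA' (mem_sdiff.mp h).1
  have step1 : tt x y A T (z + w) = (z + w + ∑ j ∈ A, y j) *
      ∑ B ∈ (A' \ T).powerset,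
        (tPoly x y B z * tt x y (A \ B) T₂ w
          + tt x y (T₂ ∪ B) T₂ z * tPoly x y ((A' \ T) \ B) w) := by
    rw [unmark_tt x y hMA hle hMT (z + w), ← hT₂def, case1 T₂ hT₂A hMT₂ z w, hAT₂]
  have step3 : (z + w + ∑ j ∈ A, y j) *
      ∑ B ∈ (A' \ T).powerset,
        (tPoly x y B z * tt x y (A \ B) T₂ w
          + tt x y (T₂ ∪ B) T₂ z * tPoly x y ((A' \ T) \ B) w)
      = ∑ B ∈ (A' \ T).powerset,
          (tt x y B ∅ z * tt x y (A \ B) T₂ w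
            + tPoly x y B z * tt x y (A \ B) T w
            + tt x y (T₂ ∪ B) T z * tPoly x y ((A' \ T) \ B) w
            + tt x y (T₂ ∪ B) T₂ z * tt x y ((A' \ T) \ B) ∅ w) := by
    rw [mul_sum]
    refine Finset.sum_congr rfl fun B hB => ?_
    have hBsub : B ⊆ A' \ T := mem_powerset.mp hB
    have hBA' : B ⊆ A' := hBsub.trans sdiff_subset
    have hBA : B ⊆ A := hBA'.trans (erase_subset M A)
    have hMB : M ∉ B := fun h => hMA' (hBA' h)
    have hMAB : M ∈ A \ B := mem_sdiff.mpr ⟨hMA, hMB⟩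
    have hleAB : ∀ a ∈ A \ B, a ≤ M := fun a ha => hle a (mem_sdiff.mp ha).1
    have hT₂B : T₂ ∪ B ⊆ A := union_subset hT₂A hBA
    have hMT₂B : M ∈ T₂ ∪ B := mem_union_left _ hMT₂
    have hleT₂B : ∀ a ∈ T₂ ∪ B, a ≤ M := fun a ha => hle a (hT₂B ha)
    have hb := unmark_tPoly x y B z
    have hc := unmark_tt x y hMAB hleAB hMT w
    rw [← hT₂def] at hc
    have he := unmark_tt x y hMT₂B hleT₂B hMT z
    rw [← hT₂def] at he
    have hf := unmark_tPoly x y ((A' \ T) \ B) w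
    have ha : ∑ j ∈ A \ B, y j + ∑ j ∈ B, y j = ∑ j ∈ A, y j := sum_sdiff hBA
    have hsplit2 : A \ (T₂ ∪ B) = (A' \ T) \ B := by
      rw [hAins, hT₂def, insert_union, insert_sdiff_insert' hMA', sdiff_sdiff]; rfl
    have hd : ∑ j ∈ (A' \ T) \ B, y j + ∑ j ∈ T₂ ∪ B, y j = ∑ j ∈ A, y j := by
      rw [← hsplit2]; exact sum_sdiff hT₂B
    rw [← hb, hc, he, ← hf]
    linear_combination (-(tPoly x y B z * tt x y (A \ B) T₂ w)) * ha
      - (tt x y (T₂ ∪ B) T₂ z * tPoly x y ((A' \ T) \ B) w) * hd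
  -- split the goal RHS
  have hATins : A \ T = insert M (A' \ T) := by
    rw [hAins]; exact insert_sdiff_of_notMem _ hMT
  have hgoal2 : ∑ B ∈ (A \ T).powerset,
      (tPoly x y B z * tt x y (A \ B) T w + tt x y (T ∪ B) T z * tPoly x y ((A \ T) \ B) w)
      = (∑ B ∈ (A' \ T).powerset,
          (tPoly x y B z * tt x y (A \ B) T w
            + tt x y (T ∪ B) T z * tPoly x y (insert M ((A' \ T) \ B)) w))
        + (∑ B ∈ (A' \ T).powerset,
          (tPoly x y (insert M B) z * tt x y (A' \ B) T w
            + tt x y (T₂ ∪ B) T z * tPoly x y ((A' \ T) \ B) w)) := by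
    rw [hATins, sum_powerset_insert hMnotAT]
    congr 1
    · refine Finset.sum_congr rfl fun B hB => ?_
      have hMB : M ∉ B := fun h => hMnotAT (mem_powerset.mp hB h)
      rw [insert_sdiff_of_notMem _ hMB]
    · refine Finset.sum_congr rfl fun B hB => ?_
      have hMB : M ∉ B := fun h => hMnotAT (mem_powerset.mp hB h)
      have e1 : A \ insert M B = A' \ B := by
        rw [hAins]; exact insert_sdiff_insert' hMA'
      have e2 : insert M (A' \ T) \ insert M B = (A' \ T) \ B :=
        insert_sdiff_insert' hMnotAT
      have e3 : T ∪ insert M B = T₂ ∪ B := by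
        rw [union_insert, hT₂def, insert_union]
      rw [e1, e2, e3]
  -- the bridge identity
  have bridge : ∑ B ∈ (A' \ T).powerset, tt x y B ∅ z * tt x y (A \ B) T₂ w
      + ∑ B ∈ (A' \ T).powerset, tt x y (T₂ ∪ B) T₂ z * tt x y ((A' \ T) \ B) ∅ w
      = ∑ B ∈ (A' \ T).powerset, tt x y (T ∪ B) T z * tPoly x y (insert M ((A' \ T) \ B)) w
      + ∑ B ∈ (A' \ T).powerset, tPoly x y (insert M B) z * tt x y (A' \ B) T w := by
    have hX1 : ∑ B ∈ (A' \ T).powerset, tt x y B ∅ z * tt x y (A \ B) T₂ w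
        = ∑ U ∈ (A' \ T).powerset, (∏ a ∈ U, dd x y M a) * Phi x y A' ∅ (T ∪ U) z w := by
      have perB : ∀ B ∈ (A' \ T).powerset,
          tt x y B ∅ z * tt x y (A \ B) T₂ w
            = ∑ U ∈ ((A' \ T) \ B).powerset,
                tt x y B ∅ z * ((∏ a ∈ U, dd x y M a) * tt x y (A' \ B) (T ∪ U) w) := by
        intro B hB
        have hBsub : B ⊆ A' \ T := mem_powerset.mp hB
        have hBA' : B ⊆ A' := hBsub.trans sdiff_subset
        have hMB : M ∉ B := fun h => hMA' (hBA' h)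
        have hMAB : M ∉ A' \ B := fun h => hMA' (mem_sdiff.mp h).1
        have h1 : A \ B = insert M (A' \ B) := by
          rw [hAins]; exact insert_sdiff_of_notMem _ hMB
        have h2 : (A' \ B) \ T = (A' \ T) \ B := by
          rw [sdiff_sdiff, sdiff_sdiff]; congr 1; exact sup_comm B T
        rw [h1, hT₂def, tt_insert x y hMAB T w, h2, mul_sum]
      rw [Finset.sum_congr rfl perB, fubini_disjoint _ (fun B U =>
        tt x y B ∅ z * ((∏ a ∈ U, dd x y M a) * tt x y (A' \ B) (T ∪ U) w))]
      refine Finset.sum_congr rfl fun U hU => ?_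
      have hUsub : U ⊆ A' \ T := mem_powerset.mp hU
      unfold Phi
      rw [empty_union]
      have h3 : A' \ (T ∪ U) = (A' \ T) \ U := by rw [sdiff_sdiff]; rfl
      rw [h3, mul_sum]
      refine Finset.sum_congr rfl fun B hB => ?_
      rw [empty_union, set_s6 hTA' hUsub (mem_powerset.mp hB)]
      ring
    have hX2 : ∑ B ∈ (A' \ T).powerset, tt x y (T₂ ∪ B) T₂ z * tt x y ((A' \ T) \ B) ∅ w
        = ∑ U ∈ (A' \ T).powerset, (∏ a ∈ U, dd x y M a) * Phi x y A' (T ∪ U) ∅ z w := by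
      have perB : ∀ B ∈ (A' \ T).powerset,
          tt x y (T₂ ∪ B) T₂ z * tt x y ((A' \ T) \ B) ∅ w
            = ∑ U ∈ B.powerset,
                ((∏ a ∈ U, dd x y M a) * tt x y (T ∪ B) (T ∪ U) z)
                  * tt x y ((A' \ T) \ B) ∅ w := by
        intro B hB
        have hBsub : B ⊆ A' \ T := mem_powerset.mp hB
        have hBA' : B ⊆ A' := hBsub.trans sdiff_subset
        have hMB : M ∉ B := fun h => hMA' (hBA' h)
        have hMTB : M ∉ T ∪ B := by
          simp only [mem_union, not_or]; exact ⟨hMT, hMB⟩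
        have hTB : Disjoint T B := disjoint_left.mpr fun a ha hb =>
          (mem_sdiff.mp (hBsub hb)).2 ha
        rw [hT₂def, insert_union, tt_insert x y hMTB T z,
          union_sdiff_cancel_left hTB, sum_mul]
      rw [Finset.sum_congr rfl perB, fubini_nested _ (fun U B =>
        ((∏ a ∈ U, dd x y M a) * tt x y (T ∪ B) (T ∪ U) z) * tt x y ((A' \ T) \ B) ∅ w)]
      refine Finset.sum_congr rfl fun U hU => ?_
      have hUsub : U ⊆ A' \ T := mem_powerset.mp hU
      unfold Phi
      rw [union_empty]
      have h3 : A' \ (T ∪ U) = (A' \ T) \ U := by rw [sdiff_sdiff]; rfl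
      rw [h3, mul_sum]
      refine Finset.sum_congr rfl fun B hB => ?_
      have e1 : (T ∪ U) ∪ B = T ∪ (U ∪ B) := union_assoc T U B
      have e2 : ((A' \ T) \ U) \ B = (A' \ T) \ (U ∪ B) := by rw [sdiff_sdiff]; rfl
      rw [empty_union, e1, e2]
      ring
    have hY3 : ∑ B ∈ (A' \ T).powerset, tt x y (T ∪ B) T z * tPoly x y (insert M ((A' \ T) \ B)) w
        = ∑ U ∈ (A' \ T).powerset, (∏ a ∈ U, dd x y M a) * Phi x y A' T U z w := by
      have perB : ∀ B ∈ (A' \ T).powerset,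
          tt x y (T ∪ B) T z * tPoly x y (insert M ((A' \ T) \ B)) w
            = ∑ U ∈ ((A' \ T) \ B).powerset,
                tt x y (T ∪ B) T z * ((∏ a ∈ U, dd x y M a) * tt x y ((A' \ T) \ B) U w) := by
        intro B hB
        have hBsub : B ⊆ A' \ T := mem_powerset.mp hB
        have hME : M ∉ (A' \ T) \ B := fun h => hMnotAT (mem_sdiff.mp h).1
        have hMin : M ∈ insert M ((A' \ T) \ B) := mem_insert_self _ _
        have hlein : ∀ a ∈ insert M ((A' \ T) \ B), a ≤ M := by
          intro a ha
          rcases mem_insert.mp ha with rfl | ha'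
          · exact le_refl _
          · exact hA'le a (mem_sdiff.mp (mem_sdiff.mp ha').1).1
        rw [tPoly_eq_tt x y hMin hlein w, ← insert_empty_eq, tt_insert x y hME ∅ w,
          sdiff_empty, mul_sum]
        refine Finset.sum_congr rfl fun U hU => ?_
        rw [empty_union]
      rw [Finset.sum_congr rfl perB, fubini_disjoint _ (fun B U =>
        tt x y (T ∪ B) T z * ((∏ a ∈ U, dd x y M a) * tt x y ((A' \ T) \ B) U w))]
      refine Finset.sum_congr rfl fun U hU => ?_
      have hUsub : U ⊆ A' \ T := mem_powerset.mp hU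
      unfold Phi
      have h3 : A' \ (T ∪ U) = (A' \ T) \ U := by rw [sdiff_sdiff]; rfl
      rw [h3, mul_sum]
      refine Finset.sum_congr rfl fun B hB => ?_
      rw [set_s7 hUsub (mem_powerset.mp hB)]
      ring
    have hY4 : ∑ B ∈ (A' \ T).powerset, tPoly x y (insert M B) z * tt x y (A' \ B) T w
        = ∑ U ∈ (A' \ T).powerset, (∏ a ∈ U, dd x y M a) * Phi x y A' U T z w := by
      have perB : ∀ B ∈ (A' \ T).powerset,
          tPoly x y (insert M B) z * tt x y (A' \ B) T w
            = ∑ U ∈ B.powerset,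
                ((∏ a ∈ U, dd x y M a) * tt x y B U z) * tt x y (A' \ B) T w := by
        intro B hB
        have hBsub : B ⊆ A' \ T := mem_powerset.mp hB
        have hBA' : B ⊆ A' := hBsub.trans sdiff_subset
        have hMB : M ∉ B := fun h => hMA' (hBA' h)
        have hMin : M ∈ insert M B := mem_insert_self _ _
        have hlein : ∀ a ∈ insert M B, a ≤ M := by
          intro a ha
          rcases mem_insert.mp ha with rfl | ha'
          · exact le_refl _
          · exact hA'le a (hBA' ha')
        rw [tPoly_eq_tt x y hMin hlein z, ← insert_empty_eq, tt_insert x y hMB ∅ z,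
          sdiff_empty, sum_mul]
        refine Finset.sum_congr rfl fun U hU => ?_
        rw [empty_union]
      rw [Finset.sum_congr rfl perB, fubini_nested _ (fun U B =>
        ((∏ a ∈ U, dd x y M a) * tt x y B U z) * tt x y (A' \ B) T w)]
      refine Finset.sum_congr rfl fun U hU => ?_
      have hUsub : U ⊆ A' \ T := mem_powerset.mp hU
      unfold Phi
      have h3 : A' \ (U ∪ T) = (A' \ T) \ U := by
        rw [sdiff_sdiff]; congr 1; exact sup_comm U T
      rw [h3, mul_sum]
      refine Finset.sum_congr rfl fun B hB => ?_
      rw [set_s8 hTA' hUsub (mem_powerset.mp hB)]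
      ring
    rw [hX1, hX2, hY3, hY4, ← sum_add_distrib, ← sum_add_distrib]
    refine Finset.sum_congr rfl fun U hU => ?_
    rw [← mul_add, ← mul_add]
    congr 1
    have hUsub : U ⊆ A' \ T := mem_powerset.mp hU
    have hUA' : U ⊆ A' := hUsub.trans sdiff_subset
    have hTU : Disjoint T U := disjoint_left.mpr fun a haT haU =>
      (mem_sdiff.mp (hUsub haU)).2 haT
    have m1 := master x y A' T U hTU hTA' hUA' z w
    have m2 := master x y A' ∅ (T ∪ U) (disjoint_bot_left) (empty_subset _)
      (union_subset hTA' hUA') z w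
    unfold Psi at m1 m2
    rw [empty_union] at m2
    linear_combination m2 - m1
  -- assemble
  rw [step1, step3, hgoal2, sum_add_distrib, sum_add_distrib, sum_add_distrib,
    sum_add_distrib, sum_add_distrib]
  linear_combination bridge

end StrehlAux

/-- Binomial-type convolution identity:
`t_A(x,y;z+w) = ∑_{B ⊔ C = A} t_B(x,y;z) · t_C(x,y;w)`, the sum being over ordered
pairs of disjoint sets `B, C` with union `A`, i.e. over `B ⊆ A` with `C = A \ B`. -/
theorem tPoly_convolution (x : ℕ → ℕ → R) (y : ℕ → R) (A : Finset ℕ)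
    (hA : ∀ a ∈ A, 0 < a) (z w : R) :
    tPoly x y A (z + w) = ∑ B ∈ A.powerset, tPoly x y B z * tPoly x y (A \ B) w := by
  clear hA
  rcases A.eq_empty_or_nonempty with rfl | hAne
  · simp [tPoly]
  have hMA : A.max' hAne ∈ A := A.max'_mem hAne
  set M := A.max' hAne with hMdef
  set A' := A.erase M with hA'def
  have hMA' : M ∉ A' := Finset.notMem_erase M A
  have hAins : A = insert M A' := (Finset.insert_erase hMA).symm
  have hle : ∀ a ∈ A, a ≤ M := fun a ha => A.le_max' a ha
  have hA'le : ∀ a ∈ A', a ≤ M := fun a ha => hle a ((Finset.erase_subset M A) ha)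
  rw [StrehlAux.tPoly_eq_tt x y hMA hle (z + w),
    StrehlAux.star x y A {M} (Finset.singleton_subset_iff.mpr hMA) z w]
  have hsing : A \ {M} = A' := by rw [hA'def, Finset.erase_eq]
  have hsplit : ∑ B ∈ A.powerset, tPoly x y B z * tPoly x y (A \ B) w
      = ∑ B ∈ A'.powerset, tPoly x y B z * tPoly x y (A \ B) w
        + ∑ B ∈ A'.powerset, tPoly x y (insert M B) z * tPoly x y (A \ insert M B) w := by
    nth_rewrite 1 [hAins]
    rw [Finset.sum_powerset_insert hMA']
  rw [hsplit, hsing, Finset.sum_add_distrib]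
  congr 1
  · refine Finset.sum_congr rfl fun B hB => ?_
    have hBA' : B ⊆ A' := Finset.mem_powerset.mp hB
    have hMB : M ∉ B := fun h => hMA' (hBA' h)
    have hMAB : M ∈ A \ B := Finset.mem_sdiff.mpr ⟨hMA, hMB⟩
    have hleAB : ∀ a ∈ A \ B, a ≤ M := fun a ha => hle a (Finset.mem_sdiff.mp ha).1
    rw [StrehlAux.tPoly_eq_tt x y hMAB hleAB w]
  · refine Finset.sum_congr rfl fun B hB => ?_
    have hBA' : B ⊆ A' := Finset.mem_powerset.mp hB
    have hMB : M ∉ B := fun h => hMA' (hBA' h)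
    have hMin : M ∈ insert M B := Finset.mem_insert_self _ _
    have hlein : ∀ a ∈ insert M B, a ≤ M := by
      intro a ha
      rcases Finset.mem_insert.mp ha with rfl | ha'
      · exact le_refl _
      · exact hA'le a (hBA' ha')
    have e1 : ({M} : Finset ℕ) ∪ B = insert M B := StrehlAux.singleton_union' M B
    have e2 : A \ insert M B = A' \ B := by
      rw [hAins]; exact StrehlAux.insert_sdiff_insert' hMA'
    rw [e1, StrehlAux.tPoly_eq_tt x y hMin hlein z, e2]
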